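/- Let z_1,…,z_n be distinct complex numbers, m_1,…,m_n positive integers, c a nonzero complex number, and f,g ∈ ℂ[x] polynomials with Wronskian f'g − fg' = c·∏_{s=1}^n (x−z_s)^{m_s}. Assume that for each s at least one of f(z_s), g(z_s) is nonzero. Then ∏_{s=1}^n (x−z_s)^{m_s−1} divides both f''g − fg'' and f''g' − f'g'' in ℂ[x]. -/

import Mathlib

open Polynomial

theorem statement_14 {n : ℕ} (hn : 1 ≤ n) (z : Fin n → ℂ) (hz : Function.Injective z)
    (m : Fin n → ℕ) (hm : ∀ s, 0 < m s) (c : ℂ) (hc : c ≠ 0)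
    (f g : Polynomial ℂ)
    (hWr : Polynomial.derivative f * g - f * Polynomial.derivative g =
      Polynomial.C c * ∏ s, (Polynomial.X - Polynomial.C (z s)) ^ m s)
    (hnv : ∀ s, f.eval (z s) ≠ 0 ∨ g.eval (z s) ≠ 0) :
    (∏ s, (Polynomial.X - Polynomial.C (z s)) ^ (m s - 1)) ∣
      (Polynomial.derivative (Polynomial.derivative f) * g -
        f * Polynomial.derivative (Polynomial.derivative g)) ∧
    (∏ s, (Polynomial.X - Polynomial.C (z s)) ^ (m s - 1)) ∣
      (Polynomial.derivative (Polynomial.derivative f) * Polynomial.derivative g -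
        Polynomial.derivative f * Polynomial.derivative (Polynomial.derivative g)) := by
  set W : Polynomial ℂ := derivative f * g - f * derivative g with hWdef
  -- pairwise coprimality
  have hpair : Pairwise (Function.onFun IsCoprime fun s : Fin n => (X - C (z s)) ^ (m s - 1)) := by
    intro s t hst
    exact ((pairwise_coprime_X_sub_C hz hst).pow)
  -- each single-factor divisibility of W and its derivative
  have hsdvdW : ∀ s : Fin n, (X - C (z s)) ^ m s ∣ W := by
    intro s
    rw [hWr]
    exact Dvd.dvd.mul_left (Finset.dvd_prod_of_mem _ (Finset.mem_univ s)) _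
  have hsdvdW' : ∀ s : Fin n, (X - C (z s)) ^ (m s - 1) ∣ derivative W := fun s =>
    pow_sub_one_dvd_derivative_of_pow_dvd (hsdvdW s)
  have hsdvdWweak : ∀ s : Fin n, (X - C (z s)) ^ (m s - 1) ∣ W := fun s =>
    dvd_trans (pow_dvd_pow _ (Nat.sub_le _ _)) (hsdvdW s)
  -- derivative of W is f''g - fg''
  have hW' : derivative W = derivative (derivative f) * g - f * derivative (derivative g) := by
    simp only [hWdef, derivative_sub, derivative_mul]
    ring
  -- the second Wronskian
  set D : Polynomial ℂ := derivative (derivative f) * derivative g -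
      derivative f * derivative (derivative g) with hDdef
  have hsdvdD : ∀ s : Fin n, (X - C (z s)) ^ (m s - 1) ∣ D := by
    intro s
    have hirr : Irreducible (X - C (z s)) := irreducible_X_sub_C (z s)
    rcases hnv s with h | h
    · -- f (z s) ≠ 0 ; use f * D = derivative g'' stuff: f*D = f''*W - f'*W' ... check
      have hid : f * D = derivative f * derivative W - derivative (derivative f) * W := by
        rw [hDdef, hW', hWdef]; ring
      have hdvd : (X - C (z s)) ^ (m s - 1) ∣ f * D := by
        rw [hid]
        exact dvd_sub ((hsdvdW' s).mul_left _) ((hsdvdWweak s).mul_left _)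
      have hcop : IsCoprime ((X - C (z s)) ^ (m s - 1)) f :=
        (hirr.coprime_iff_not_dvd.2 (by
          rw [dvd_iff_isRoot]; exact fun hr => h hr)).pow_left
      exact hcop.dvd_of_dvd_mul_left hdvd
    · have hid : g * D = derivative g * derivative W - derivative (derivative g) * W := by
        rw [hDdef, hW', hWdef]; ring
      have hdvd : (X - C (z s)) ^ (m s - 1) ∣ g * D := by
        rw [hid]
        exact dvd_sub ((hsdvdW' s).mul_left _) ((hsdvdWweak s).mul_left _)
      have hcop : IsCoprime ((X - C (z s)) ^ (m s - 1)) g :=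
        (hirr.coprime_iff_not_dvd.2 (by
          rw [dvd_iff_isRoot]; exact fun hr => h hr)).pow_left
      exact hcop.dvd_of_dvd_mul_left hdvd
  constructor
  · rw [← hW']
    exact Fintype.prod_dvd_of_coprime hpair hsdvdW'
  · exact Fintype.prod_dvd_of_coprime hpair hsdvdD
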